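/- arXiv:2007.03927 — 2 statements merged into one kernel-verified Lean document; each statement's English description precedes it below -/
import Mathlib

section
/- Let X ∈ ℝ^{d×n}, v ∈ ℝ^n, let q be a positive integer, and let (i₁,…,i_q) ∈ [d]^q. Define diagonal n×n matrices recursively by D^{(0)} = diag(v) and D^{(a)} = D^{(a−1)}·diag(X_{i_a,⋆}) for a = 1,…,q, where X_{i,⋆} denotes the i-th row of X. Assume ‖X^{⊗(q−a)} D^{(a−1)} X^⊤‖_F > 0 for every a = 1,…,q (with X^{⊗0} interpreted as the 1×n all-ones matrix). Then ∏_{a=1}^{q} ( ‖X^{⊗(q−a)} D^{(a−1)} (X_{i_a,⋆})^⊤‖₂² / ‖X^{⊗(q−a)} D^{(a−1)} X^⊤‖_F² ) = ( [X^{⊗q} v]_{(i₁,…,i_q)} )² / ‖X^{⊗q} v‖₂². -/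
open Matrix

def tensorPow {d n : ℕ} (X : Matrix (Fin d) (Fin n) ℝ) (q : ℕ) :
    Matrix (Fin q → Fin d) (Fin n) ℝ :=
  Matrix.of fun t l => ∏ a, X (t a) l

lemma tp_step {d n : ℕ} (X : Matrix (Fin d) (Fin n) ℝ) (k : ℕ) (u : Fin n → ℝ) :
    ∑ s : Fin (k+1) → Fin d, ((tensorPow X (k+1)).mulVec u s)^2 =
    ∑ t : Fin k → Fin d, ∑ j : Fin d,
      ((tensorPow X k * Matrix.diagonal u * Xᵀ) t j)^2 := by
  have h1 : ∑ p : Fin d × (Fin k → Fin d),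
      ((tensorPow X k * Matrix.diagonal u * Xᵀ) p.2 p.1)^2
      = ∑ s : Fin (k+1) → Fin d, ((tensorPow X (k+1)).mulVec u s)^2 := by
    refine Fintype.sum_equiv (Fin.consEquiv fun _ : Fin (k+1) => Fin d) _ _ ?_
    rintro ⟨j, t⟩
    congr 1
    simp only [Matrix.mulVec, dotProduct, Matrix.mul_apply, Matrix.diagonal_apply,
      Matrix.transpose_apply, tensorPow, Matrix.of_apply, Fin.consEquiv_apply,
      mul_ite, mul_zero, ite_mul, zero_mul, Finset.sum_ite_eq, Finset.sum_ite_eq', Finset.mem_univ, if_pos]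
    refine Finset.sum_congr rfl fun l _ => ?_
    rw [Fin.prod_univ_succ]
    simp only [Fin.cons_zero, Fin.cons_succ]
    ring
  rw [← h1, Fintype.sum_prod_type, Finset.sum_comm]

lemma F_cast {d n : ℕ} (X : Matrix (Fin d) (Fin n) ℝ) (u : Fin n → ℝ)
    (k m : ℕ) (h : m = k + 1) :
    (∑ t : Fin m → Fin d, ((tensorPow X m).mulVec u t)^2) =
    ∑ t : Fin (k+1) → Fin d, ((tensorPow X (k+1)).mulVec u t)^2 := by
  subst h; rfl

lemma F_zero {d n : ℕ} (X : Matrix (Fin d) (Fin n) ℝ) (u : Fin n → ℝ)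
    (m : ℕ) (h : m = 0) :
    (∑ t : Fin m → Fin d, ((tensorPow X m).mulVec u t)^2) = (∑ l, u l)^2 := by
  subst h
  rw [Fintype.sum_unique]
  congr 1
  simp [tensorPow, Matrix.mulVec, dotProduct]

lemma tel_aux (F : ℕ → ℝ) : ∀ q : ℕ, 0 < q → (∀ a < q, F a ≠ 0) →
    ∏ a ∈ Finset.range q, (F (a+1) / F a) = F q / F 0 := by
  intro q
  induction q with
  | zero => omega
  | succ m ih =>
    intro _ h
    rcases Nat.eq_zero_or_pos m with hm | hm
    · subst hm; simp
    · rw [Finset.prod_range_succ, ih hm (fun a ha => h a (by omega))]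
      have h1 : F m ≠ 0 := h m (by omega)
      have h0 : F 0 ≠ 0 := h 0 (by omega)
      field_simp

/-- telescoping product of conditional `ℓ₂`-sampling
probabilities. With `D^{(a)} = diag(v) · diag(X_{i₁,⋆}) ⋯ diag(X_{i_a,⋆})`
(whose diagonal is `w a`), the product over `a = 1, …, q` (here `a : Fin q`,
zero-based) of
`‖X^{⊗(q−a)} D^{(a−1)} (X_{i_a,⋆})ᵀ‖₂² / ‖X^{⊗(q−a)} D^{(a−1)} Xᵀ‖_F²`
equals `([X^{⊗q} v]_{(i₁,…,i_q)})² / ‖X^{⊗q} v‖₂²`. -/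
theorem telescoping_l2_sampling_product
    (d n q : ℕ) (hq : 0 < q) (X : Matrix (Fin d) (Fin n) ℝ) (v : Fin n → ℝ)
    (i : Fin q → Fin d)
    (w : ℕ → Fin n → ℝ)
    (hw : ∀ (a : ℕ) (l : Fin n),
      w a l = v l * ∏ b : Fin q, if (b : ℕ) < a then X (i b) l else 1)
    (hden : ∀ a : Fin q,
      0 < ∑ t : Fin (q - ((a : ℕ) + 1)) → Fin d, ∑ j : Fin d,
        ((tensorPow X (q - ((a : ℕ) + 1)) * Matrix.diagonal (w a) * Xᵀ) t j) ^ 2) :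
    (∏ a : Fin q,
        (∑ t : Fin (q - ((a : ℕ) + 1)) → Fin d,
            ((tensorPow X (q - ((a : ℕ) + 1))).mulVec
              (fun l => w a l * X (i a) l) t) ^ 2) /
          (∑ t : Fin (q - ((a : ℕ) + 1)) → Fin d, ∑ j : Fin d,
            ((tensorPow X (q - ((a : ℕ) + 1)) * Matrix.diagonal (w a) * Xᵀ) t j) ^ 2)) =
      ((tensorPow X q).mulVec v i) ^ 2 /
        ∑ t : Fin q → Fin d, ((tensorPow X q).mulVec v t) ^ 2 := by
  let F : ℕ → ℝ := fun a =>
    ∑ t : Fin (q - a) → Fin d, ((tensorPow X (q - a)).mulVec (w a) t)^2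
  -- w recursion
  have hw_succ : ∀ (a : Fin q) (l : Fin n), w ((a : ℕ) + 1) l = w a l * X (i a) l := by
    intro a l
    rw [hw, hw]
    have key : ∀ b : Fin q, (if (b : ℕ) < (a : ℕ) + 1 then X (i b) l else 1)
        = (if (b : ℕ) < (a : ℕ) then X (i b) l else 1) * (if b = a then X (i a) l else 1) := by
      intro b
      rcases lt_trichotomy (b : ℕ) (a : ℕ) with h | h | h
      · have hba : b ≠ a := fun e => by simp [e] at h
        simp [h, show (b : ℕ) < (a : ℕ) + 1 by omega, hba]
      · have hba : b = a := Fin.ext h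
        simp [hba]
      · have hba : b ≠ a := fun e => by simp [e] at h
        simp [show ¬ ((b : ℕ) < (a : ℕ)) by omega,
          show ¬ ((b : ℕ) < (a : ℕ) + 1) by omega, hba]
    rw [Finset.prod_congr rfl (fun b _ => key b), Finset.prod_mul_distrib,
      Finset.prod_ite_eq' Finset.univ a (fun _ => X (i a) l)]
    simp only [Finset.mem_univ, if_pos]
    ring
  -- denominator a = F a
  have hdenF : ∀ a : Fin q,
      (∑ t : Fin (q - ((a : ℕ) + 1)) → Fin d, ∑ j : Fin d,
        ((tensorPow X (q - ((a : ℕ) + 1)) * Matrix.diagonal (w a) * Xᵀ) t j) ^ 2)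
      = F (a : ℕ) := by
    intro a
    have hk : q - (a : ℕ) = (q - ((a : ℕ) + 1)) + 1 := by omega
    exact ((F_cast X (w a) (q - ((a : ℕ) + 1)) (q - (a : ℕ)) hk).trans
      (tp_step X (q - ((a : ℕ) + 1)) (w a))).symm
  -- numerator a = F (a+1)
  have hnumF : ∀ a : Fin q,
      (∑ t : Fin (q - ((a : ℕ) + 1)) → Fin d,
        ((tensorPow X (q - ((a : ℕ) + 1))).mulVec
          (fun l => w a l * X (i a) l) t) ^ 2) = F ((a : ℕ) + 1) := by
    intro a
    have : (fun l => w a l * X (i a) l) = w ((a : ℕ) + 1) :=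
      funext fun l => (hw_succ a l).symm
    show _ = (∑ t : Fin (q - ((a : ℕ) + 1)) → Fin d,
        ((tensorPow X (q - ((a : ℕ) + 1))).mulVec (w ((a : ℕ) + 1)) t) ^ 2)
    rw [this]
  have hne : ∀ a < q, F a ≠ 0 := by
    intro a ha
    have h := hden ⟨a, ha⟩
    rw [hdenF ⟨a, ha⟩] at h
    exact ne_of_gt h
  have main : (∏ a : Fin q,
        (∑ t : Fin (q - ((a : ℕ) + 1)) → Fin d,
            ((tensorPow X (q - ((a : ℕ) + 1))).mulVec
              (fun l => w a l * X (i a) l) t) ^ 2) /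
          (∑ t : Fin (q - ((a : ℕ) + 1)) → Fin d, ∑ j : Fin d,
            ((tensorPow X (q - ((a : ℕ) + 1)) * Matrix.diagonal (w a) * Xᵀ) t j) ^ 2))
      = ∏ a : Fin q, (F ((a : ℕ) + 1) / F (a : ℕ)) :=
    Finset.prod_congr rfl fun a _ => by rw [hnumF a, hdenF a]
  rw [main, Fin.prod_univ_eq_prod_range (fun a => F (a+1) / F a) q,
    tel_aux F q hq hne]
  congr 1
  · -- F q = numerator
    show (∑ t : Fin (q - q) → Fin d, ((tensorPow X (q - q)).mulVec (w q) t)^2) = _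
    rw [F_zero X (w q) (q - q) (Nat.sub_self q)]
    congr 1
    simp only [Matrix.mulVec, dotProduct, tensorPow, Matrix.of_apply]
    refine Finset.sum_congr rfl fun l _ => ?_
    rw [hw q l]
    have : ∀ b : Fin q, (if (b : ℕ) < q then X (i b) l else 1) = X (i b) l := by
      intro b; simp [b.isLt]
    rw [Finset.prod_congr rfl fun b _ => this b]
    ring
  · -- F 0 = denominator
    show (∑ t : Fin (q - 0) → Fin d, ((tensorPow X (q - 0)).mulVec (w 0) t)^2) = _
    have hw0 : w 0 = v := by funext l; rw [hw]; simp
    rw [hw0]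
    rfl
end

section
/- Let K, A, M ∈ ℝ^{n×n} be symmetric matrices with K and A positive semidefinite, let λ > 0 and ε ∈ (0,1). Suppose ‖A − K‖_op ≤ (ε/3)·λ and (A + λI)/(1 + ε/3) ⪯ M + λI ⪯ (A + λI)/(1 − ε/3). Then (K + λI)/(1 + ε) ⪯ M + λI ⪯ (K + λI)/(1 − ε); i.e., an (ε/3, λ)-spectral approximation of a matrix A that is entrywise-in-operator-norm (ε/3)·λ-close to K is an (ε, λ)-spectral approximation of K. -/
open Matrix

private lemma quad_bound {n : ℕ} (B : Matrix (Fin n) (Fin n) ℝ) (x : Fin n → ℝ) :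
    |x ⬝ᵥ B *ᵥ x| ≤ ‖Matrix.toEuclideanCLM (𝕜 := ℝ) B‖ * (x ⬝ᵥ x) := by
  set T := Matrix.toEuclideanCLM (𝕜 := ℝ) B
  set y : EuclideanSpace ℝ (Fin n) := (WithLp.equiv 2 _).symm x with hy
  have hTy : T y = (WithLp.equiv 2 _).symm (B *ᵥ x) := by
    simp [T, hy, WithLp.equiv_symm_apply, Matrix.toEuclideanCLM_toLp]
  have h1 : (inner ℝ (T y) y : ℝ) = x ⬝ᵥ B *ᵥ x := by
    rw [hTy]; change x ⬝ᵥ star (B *ᵥ x) = _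
    simp [dotProduct_comm]
  have h2 : (inner ℝ y y : ℝ) = x ⬝ᵥ x := by
    change x ⬝ᵥ star x = _; simp
  have h3 : |(inner ℝ (T y) y : ℝ)| ≤ ‖T y‖ * ‖y‖ := abs_real_inner_le_norm _ _
  have h4 : ‖T y‖ ≤ ‖T‖ * ‖y‖ := T.le_opNorm y
  have h5 : ‖y‖ * ‖y‖ = x ⬝ᵥ x := by
    rw [← h2, real_inner_self_eq_norm_mul_norm]
  calc |x ⬝ᵥ B *ᵥ x| = |(inner ℝ (T y) y : ℝ)| := by rw [h1]
    _ ≤ ‖T y‖ * ‖y‖ := h3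
    _ ≤ (‖T‖ * ‖y‖) * ‖y‖ := by
        apply mul_le_mul_of_nonneg_right h4 (norm_nonneg _)
    _ = ‖T‖ * (x ⬝ᵥ x) := by rw [mul_assoc, h5]

/-- transfer step. If `‖A − K‖_op ≤ (ε/3)λ` and `M` is an
`(ε/3, λ)`-spectral approximation to `A`, then `M` is an `(ε, λ)`-spectral
approximation to `K`. -/
theorem spectral_approx_transfer
    (n : ℕ) (K A M : Matrix (Fin n) (Fin n) ℝ) (lam ε : ℝ)
    (hK : K.PosSemidef) (hA : A.PosSemidef) (hM : M.IsHermitian)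
    (hlam : 0 < lam) (hε₀ : 0 < ε) (hε₁ : ε < 1)
    (hclose : ‖Matrix.toEuclideanCLM (𝕜 := ℝ) (A - K)‖ ≤ ε / 3 * lam)
    (h₁ : ((M + lam • (1 : Matrix (Fin n) (Fin n) ℝ)) -
        (1 / (1 + ε / 3)) •
          (A + lam • (1 : Matrix (Fin n) (Fin n) ℝ))).PosSemidef)
    (h₂ : ((1 / (1 - ε / 3)) • (A + lam • (1 : Matrix (Fin n) (Fin n) ℝ)) -
        (M + lam • (1 : Matrix (Fin n) (Fin n) ℝ))).PosSemidef) :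
    ((M + lam • (1 : Matrix (Fin n) (Fin n) ℝ)) -
        (1 / (1 + ε)) • (K + lam • (1 : Matrix (Fin n) (Fin n) ℝ))).PosSemidef ∧
    ((1 / (1 - ε)) • (K + lam • (1 : Matrix (Fin n) (Fin n) ℝ)) -
        (M + lam • (1 : Matrix (Fin n) (Fin n) ℝ))).PosSemidef := by
  have hε3 : (0:ℝ) < 1 + ε / 3 := by linarith
  have hε3' : (0:ℝ) < 1 - ε / 3 := by linarith
  have hε1 : (0:ℝ) < 1 + ε := by linarith
  have hε1' : (0:ℝ) < 1 - ε := by linarith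
  -- Hermitian parts
  have hone : (lam • (1 : Matrix (Fin n) (Fin n) ℝ)).IsHermitian := by
    simp [Matrix.IsHermitian]
  have hMl : (M + lam • (1 : Matrix (Fin n) (Fin n) ℝ)).IsHermitian := hM.add hone
  have hKl : (K + lam • (1 : Matrix (Fin n) (Fin n) ℝ)).IsHermitian := hK.1.add hone
  have hKls : ∀ c : ℝ, (c • (K + lam • (1 : Matrix (Fin n) (Fin n) ℝ))).IsHermitian := by
    intro c
    unfold Matrix.IsHermitian
    rw [Matrix.conjTranspose_smul, hKl.eq, star_trivial]
  -- quadratic form bound from operator norm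
  have hquad : ∀ x : Fin n → ℝ,
      |x ⬝ᵥ (A - K) *ᵥ x| ≤ ε / 3 * lam * (x ⬝ᵥ x) := by
    intro x
    have hb := quad_bound (A - K) x
    have hs : (0:ℝ) ≤ x ⬝ᵥ x := by simpa using dotProduct_star_self_nonneg x
    calc |x ⬝ᵥ (A - K) *ᵥ x| ≤ ‖Matrix.toEuclideanCLM (𝕜 := ℝ) (A - K)‖ * (x ⬝ᵥ x) := hb
      _ ≤ ε / 3 * lam * (x ⬝ᵥ x) := mul_le_mul_of_nonneg_right hclose hs
  constructor
  · refine Matrix.PosSemidef.of_dotProduct_mulVec_nonneg (hMl.sub (hKls _)) fun x => ?_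
    have e1 := h₁.dotProduct_mulVec_nonneg x
    have e2 := hquad x
    have hk := hK.dotProduct_mulVec_nonneg x
    have ha := hA.dotProduct_mulVec_nonneg x
    have hs : (0:ℝ) ≤ x ⬝ᵥ x := by simpa using dotProduct_star_self_nonneg x
    simp only [star_trivial, Matrix.sub_mulVec, Matrix.add_mulVec, Matrix.smul_mulVec,
      Matrix.one_mulVec, dotProduct_sub, dotProduct_add,
      dotProduct_smul, smul_eq_mul] at e1 e2 hk ha ⊢
    set m := x ⬝ᵥ M *ᵥ x
    set a := x ⬝ᵥ A *ᵥ x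
    set k := x ⬝ᵥ K *ᵥ x
    set s := x ⬝ᵥ x
    have e2' : a - k ≥ -(ε / 3 * lam * s) := by
      have := abs_le.mp e2; linarith [this.1]
    have e1' : a + lam * s ≤ (1 + ε / 3) * (m + lam * s) := by
      have : (1 / (1 + ε / 3)) * (a + lam * s) ≤ m + lam * s := by linarith
      rw [div_mul_eq_mul_div, one_mul, div_le_iff₀ hε3] at this
      linarith
    have key : 0 ≤ m + lam * s - (1 / (1 + ε)) * (k + lam * s) := by
      rw [sub_nonneg, div_mul_eq_mul_div, one_mul, div_le_iff₀ hε1]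
      nlinarith [mul_nonneg hlam.le hs, mul_nonneg hε₀.le (mul_nonneg hlam.le hs),
        mul_nonneg (mul_nonneg hε₀.le hε₀.le) (mul_nonneg hlam.le hs)]
    linarith
  · refine Matrix.PosSemidef.of_dotProduct_mulVec_nonneg ((hKls _).sub hMl) fun x => ?_
    have e1 := h₂.dotProduct_mulVec_nonneg x
    have e2 := hquad x
    have hk := hK.dotProduct_mulVec_nonneg x
    have ha := hA.dotProduct_mulVec_nonneg x
    have hs : (0:ℝ) ≤ x ⬝ᵥ x := by simpa using dotProduct_star_self_nonneg x
    simp only [star_trivial, Matrix.sub_mulVec, Matrix.add_mulVec, Matrix.smul_mulVec,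
      Matrix.one_mulVec, dotProduct_sub, dotProduct_add,
      dotProduct_smul, smul_eq_mul] at e1 e2 hk ha ⊢
    set m := x ⬝ᵥ M *ᵥ x
    set a := x ⬝ᵥ A *ᵥ x
    set k := x ⬝ᵥ K *ᵥ x
    set s := x ⬝ᵥ x
    have e2' : a - k ≤ ε / 3 * lam * s := (abs_le.mp e2).2
    have e1' : (1 - ε / 3) * (m + lam * s) ≤ a + lam * s := by
      have : m + lam * s ≤ (1 / (1 - ε / 3)) * (a + lam * s) := by linarith
      rw [div_mul_eq_mul_div, one_mul, le_div_iff₀ hε3'] at this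
      linarith
    have key : 0 ≤ (1 / (1 - ε)) * (k + lam * s) - (m + lam * s) := by
      rw [sub_nonneg, div_mul_eq_mul_div, one_mul, le_div_iff₀ hε1']
      nlinarith [mul_nonneg hlam.le hs, mul_nonneg hε₀.le (mul_nonneg hlam.le hs),
        mul_nonneg (mul_nonneg hε₀.le hε₀.le) (mul_nonneg hlam.le hs)]
    linarith
end
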